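/- Let N be a nilpotent endomorphism of a finite-dimensional vector space V over a field of characteristic zero. Then there exists a unique finite increasing filtration W of V such that N(W_m) ⊆ W_{m-2} for all m ∈ ℤ and such that for every k ≥ 0 the map induced by N^k gives an isomorphism gr^W_k V → gr^W_{-k} V. -/
import Mathlib


/-- `W` is the monodromy weight filtration of the nilpotent endomorphism `N`,
centered at `0`: it is increasing, exhaustive and separated, satisfies
`N (W m) ⊆ W (m-2)`, and for every `k ≥ 0` the map induced by `N ^ k` gives an
isomorphism `gr^W_k → gr^W_{-k}` (expressed by the injectivity and surjectivity
conditions on associated graded pieces). -/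
def IsWeightFiltration {K V : Type*} [Field K] [AddCommGroup V] [Module K V]
    (N : V →ₗ[K] V) (W : ℤ → Submodule K V) : Prop :=
  Monotone W ∧ (∃ m : ℤ, W m = ⊥) ∧ (∃ m : ℤ, W m = ⊤) ∧
  (∀ m : ℤ, (W m).map N ≤ W (m - 2)) ∧
  (∀ k : ℕ,
    W (k : ℤ) ⊓ (W (-(k : ℤ) - 1)).comap (N ^ k) ≤ W ((k : ℤ) - 1) ∧
    W (-(k : ℤ)) ≤ W (-(k : ℤ) - 1) ⊔ (W (k : ℤ)).map (N ^ k))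

section Lemmas
variable {K V : Type*} [Field K] [AddCommGroup V] [Module K V]
  {N : V →ₗ[K] V} {W : ℤ → Submodule K V}

lemma IsWeightFiltration.map_pow (hW : IsWeightFiltration N W) (k : ℕ) (m : ℤ) :
    (W m).map (N ^ k) ≤ W (m - 2 * k) := by
  induction k with
  | zero =>
      have h : m - 2 * ((0:ℕ):ℤ) = m := by norm_num
      rw [h, pow_zero, Module.End.one_eq_id, Submodule.map_id]
  | succ k ih =>
      have h1 : (W m).map (N ^ (k+1)) = ((W m).map (N ^ k)).map N := by
        rw [pow_succ', Module.End.mul_eq_comp, Submodule.map_comp]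
      have h2 : m - 2*(k:ℤ) - 2 = m - 2*((k+1:ℕ):ℤ) := by push_cast; ring
      rw [h1]
      calc ((W m).map (N ^ k)).map N ≤ (W (m - 2*k)).map N := Submodule.map_mono ih
        _ ≤ W (m - 2*(k:ℤ) - 2) := hW.2.2.2.1 _
        _ = W (m - 2*((k+1:ℕ):ℤ)) := by rw [h2]

lemma IsWeightFiltration.ker_le (hW : IsWeightFiltration N W) (a : ℕ) :
    LinearMap.ker (N ^ (a+1)) ≤ W (a : ℤ) := by
  obtain ⟨mt, hmt⟩ := hW.2.2.1
  have key : ∀ i : ℕ, ∀ a : ℕ, mt ≤ (a:ℤ) + i → LinearMap.ker (N ^ (a+1)) ≤ W (a:ℤ) := by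
    intro i
    induction i with
    | zero =>
        intro a ha
        have h := hW.1 (show mt ≤ (a:ℤ) by omega)
        rw [hmt] at h
        exact le_trans le_top h
    | succ i ih =>
        intro a ha x hx
        have hx0 : (N ^ (a+1)) x = 0 := hx
        have hx2 : x ∈ LinearMap.ker (N ^ (a+1+1)) := by
          rw [LinearMap.mem_ker, pow_succ' N (a+1), Module.End.mul_apply, hx0, map_zero]
        have hx3 : x ∈ W (((a+1:ℕ)):ℤ) := by
          have := ih (a+1) (by push_cast; omega) hx2
          have e : ((a+1:ℕ):ℤ) = (a:ℤ) + 1 := by push_cast; ring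
          rw [e]; rwa [e] at this
        have h5 := (hW.2.2.2.2 (a+1)).1
        have hmem : x ∈ W ((a+1:ℕ):ℤ) ⊓ (W (-((a+1:ℕ):ℤ) - 1)).comap (N ^ (a+1)) := by
          exact ⟨hx3, Submodule.mem_comap.mpr (by rw [hx0]; exact (W _).zero_mem)⟩
        have h6 := h5 hmem
        have e2 : ((a+1:ℕ):ℤ) - 1 = (a:ℤ) := by push_cast; ring
        rwa [e2] at h6
  exact key (mt - a).toNat a (by omega)

lemma IsWeightFiltration.le_range (hW : IsWeightFiltration N W) (a : ℕ) :
    W (-(a:ℤ)) ≤ LinearMap.range (N ^ a) := by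
  obtain ⟨mb, hmb⟩ := hW.2.1
  have key : ∀ i : ℕ, ∀ a : ℕ, (-(a:ℤ) - i ≤ mb) → W (-(a:ℤ)) ≤ LinearMap.range (N ^ a) := by
    intro i
    induction i with
    | zero =>
        intro a ha
        have h := hW.1 (show (-(a:ℤ)) ≤ mb by omega)
        rw [hmb] at h
        exact le_trans h bot_le
    | succ i ih =>
        intro a ha
        have hsurj := (hW.2.2.2.2 a).2
        have h1 : W (-(a:ℤ) - 1) ≤ LinearMap.range (N ^ a) := by
          have h2 : W (-((a+1:ℕ):ℤ)) ≤ LinearMap.range (N ^ (a+1)) := by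
            apply ih (a+1); push_cast; omega
          have h3 : LinearMap.range (N ^ (a+1)) ≤ LinearMap.range (N ^ a) := by
            rintro x ⟨y, rfl⟩
            exact ⟨N y, by rw [← Module.End.mul_apply, ← pow_succ]⟩
          refine le_trans (le_trans ?_ h2) h3
          apply le_of_eq; congr 1; push_cast; ring
        refine le_trans hsurj (sup_le h1 ?_)
        rintro x ⟨y, _, rfl⟩
        exact ⟨y, rfl⟩
  exact key (mb + a).natAbs a (by omega)

end Lemmas

universe u v

theorem weight_aux {K : Type u} [Field K] :
    ∀ (l : ℕ) {V : Type v} [AddCommGroup V] [Module K V] (N : V →ₗ[K] V),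
      N ^ (l+1) = 0 → ∃! W : ℤ → Submodule K V, IsWeightFiltration N W := by
  intro l
  induction l with
  | zero =>
      intro V _ _ N hN
      rw [zero_add, pow_one] at hN
      subst hN
      refine ⟨fun m => if 0 ≤ m then ⊤ else ⊥,
        ⟨?_, ⟨-1, by norm_num⟩, ⟨0, by norm_num⟩, ?_, ?_⟩, ?_⟩
      · intro a b hab
        dsimp only
        split_ifs with h1 h2
        · exact le_rfl
        · exact absurd (le_trans h1 hab) h2
        · exact bot_le
        · exact bot_le
      · intro m
        rw [Submodule.map_zero]
        exact bot_le
      · intro k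
        rcases Nat.eq_zero_or_pos k with hk | hk
        · subst hk
          constructor
          · intro x hx
            have h2 := (Submodule.mem_inf.mp hx).2
            rw [Submodule.mem_comap, pow_zero, Module.End.one_apply] at h2
            norm_num at h2 ⊢
            exact h2
          · intro x hx
            simp only [Nat.cast_zero, neg_zero, zero_sub] at hx ⊢
            refine Submodule.mem_sup.mpr ⟨0, by simp, x, ?_, by abel⟩
            rw [pow_zero]
            exact ⟨x, by simpa using hx, by simp⟩
        · have hk0 : (0 : V →ₗ[K] V) ^ k = 0 := zero_pow (by omega)
          constructor
          · intro x hx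
            have : (0:ℤ) ≤ (k:ℤ) - 1 := by omega
            simp only [if_pos this]
            trivial
          · intro x hx
            have : ¬ (0:ℤ) ≤ -(k:ℤ) := by omega
            simp only [if_neg this] at hx
            have hx0 : x = 0 := by simpa using hx
            subst hx0
            exact zero_mem _
      · intro W2 hW2
        funext m
        by_cases hm : 0 ≤ m
        · show W2 m = if 0 ≤ m then ⊤ else ⊥
          rw [if_pos hm, eq_top_iff]
          have h := hW2.ker_le m.toNat
          rw [zero_pow (Nat.succ_ne_zero _), LinearMap.ker_zero] at h
          rwa [Int.toNat_of_nonneg hm] at h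
        · show W2 m = if 0 ≤ m then ⊤ else ⊥
          rw [if_neg hm, eq_bot_iff]
          have h := hW2.le_range (-m).toNat
          rw [zero_pow (by omega), LinearMap.range_zero] at h
          have e : (-(((-m).toNat : ℕ) : ℤ)) = m := by omega
          rwa [e] at h
  | succ l IH =>
      intro V _ _ N hN
      -- hN : N ^ (l + 1 + 1) = 0
      have hpow_zero : ∀ b : ℕ, l + 2 ≤ b → (N ^ b : V →ₗ[K] V) = 0 := by
        intro b hb
        obtain ⟨c, rfl⟩ := Nat.exists_eq_add_of_le hb
        rw [pow_add]
        rw [show N ^ (l+2) = 0 from hN, zero_mul]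
      set S : Submodule K V := LinearMap.ker (N ^ (l+1)) with hS
      set T : Submodule K V := LinearMap.range (N ^ (l+1)) with hT
      have hNx_mem : ∀ x : V, N x ∈ S := by
        intro x
        rw [hS, LinearMap.mem_ker, ← Module.End.mul_apply, ← pow_succ, hN]
        rfl
      have hpow_ker : ∀ b : ℕ, l + 1 ≤ b → ∀ x ∈ S, (N ^ b) x = 0 := by
        intro b hb x hx
        obtain ⟨c, rfl⟩ := Nat.exists_eq_add_of_le hb
        have h1 : (N ^ (l+1+c) : V →ₗ[K] V) = N ^ c * N ^ (l+1) := by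
          rw [← pow_add, add_comm]
        rw [h1, Module.End.mul_apply, show (N ^ (l+1)) x = 0 from hx, map_zero]
      have hTS : T ≤ S := by
        rintro x ⟨y, rfl⟩
        rw [hS, LinearMap.mem_ker, ← Module.End.mul_apply, ← pow_add]
        rw [hpow_zero (l+1+(l+1)) (by omega)]
        rfl
      set T' : Submodule K S := T.comap S.subtype with hT'
      have mem_T' : ∀ x : S, x ∈ T' ↔ (x : V) ∈ T := by
        intro x; rw [hT']; exact Iff.rfl
      set π : S →ₗ[K] (S ⧸ T') := T'.mkQ with hπ
      set NS : S →ₗ[K] S := N.restrict (fun x _ => hNx_mem x) with hNS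
      have hNS_coe : ∀ x : S, ((NS x : S) : V) = N (x : V) := fun x => rfl
      have hNS_pow_coe : ∀ (k : ℕ) (x : S), (((NS ^ k) x : S) : V) = (N ^ k) (x : V) := by
        intro k
        induction k with
        | zero => intro x; rfl
        | succ k ih =>
            intro x
            rw [pow_succ' NS k, Module.End.mul_apply, hNS_coe, ih, ← Module.End.mul_apply,
              ← pow_succ']
      have hNS_T' : T' ≤ T'.comap NS := by
        intro x hx
        rw [Submodule.mem_comap, mem_T']
        obtain ⟨y, hy⟩ := (mem_T' x).mp hx
        rw [hNS_coe, ← hy, ← Module.End.mul_apply, ← pow_succ', hpow_zero (l+1+1) (by omega)]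
        exact zero_mem T
      set N' : (S ⧸ T') →ₗ[K] (S ⧸ T') := T'.mapQ T' NS hNS_T' with hN'
      have hπ_surj : Function.Surjective π := Submodule.mkQ_surjective T'
      have hπ_zero : ∀ x : S, (x : V) ∈ T → π x = 0 := by
        intro x hx
        rw [hπ, Submodule.mkQ_apply, Submodule.Quotient.mk_eq_zero]
        exact (mem_T' x).mpr hx
      have hπ_zero' : ∀ x : S, π x = 0 → (x : V) ∈ T := by
        intro x hx
        rw [hπ, Submodule.mkQ_apply, Submodule.Quotient.mk_eq_zero] at hx
        exact (mem_T' x).mp hx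
      have hN'_mk : ∀ x : S, N' (π x) = π (NS x) := by
        intro x
        rw [hπ, hN', Submodule.mkQ_apply, Submodule.mapQ_apply, Submodule.mkQ_apply]
      have hN'_pow_mk : ∀ (k : ℕ) (x : S), (N' ^ k) (π x) = π ((NS ^ k) x) := by
        intro k
        induction k with
        | zero => intro x; rfl
        | succ k ih =>
            intro x
            rw [pow_succ' N' k, Module.End.mul_apply, ih, hN'_mk, pow_succ' NS k,
              Module.End.mul_apply]
      have hN'_pow_L : N' ^ (l+1) = 0 := by
        apply LinearMap.ext
        intro y
        obtain ⟨x, rfl⟩ := hπ_surj y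
        rw [hN'_pow_mk]
        have hx0 : (NS ^ (l+1)) x = 0 := by
          apply Subtype.ext
          rw [hNS_pow_coe]
          exact x.2
        rw [hx0, map_zero]
        rfl
      obtain ⟨W', hW', hW'uniq⟩ := IH N' hN'_pow_L
      have hker' : ∀ a : ℕ, LinearMap.ker (N' ^ a) ≤ W' ((a:ℤ) - 1) := by
        intro a
        cases a with
        | zero => rw [pow_zero, Module.End.one_eq_id, LinearMap.ker_id]; exact bot_le
        | succ a =>
            have e : ((a+1:ℕ):ℤ) - 1 = (a:ℤ) := by push_cast; ring
            rw [e]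
            exact hW'.ker_le a
      have hW'top : ∀ m : ℤ, (l:ℤ) ≤ m → W' m = ⊤ := by
        intro m hm
        rw [eq_top_iff]
        have h := hW'.ker_le l
        rw [hN'_pow_L, LinearMap.ker_zero] at h
        exact le_trans h (hW'.1 hm)
      have hW'bot : ∀ m : ℤ, m ≤ -((l:ℤ)+1) → W' m = ⊥ := by
        intro m hm
        rw [eq_bot_iff]
        have h := hW'.le_range (l+1)
        rw [hN'_pow_L, LinearMap.range_zero] at h
        refine le_trans (hW'.1 (show m ≤ -((l+1:ℕ):ℤ) by push_cast; omega)) h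
      set Φ : Submodule K (S ⧸ T') → Submodule K V := fun U => (U.comap π).map S.subtype
        with hΦdef
      have mem_Φ : ∀ (U : Submodule K (S ⧸ T')) (x : V),
          x ∈ Φ U ↔ ∃ hx : x ∈ S, π ⟨x, hx⟩ ∈ U := by
        intro U x
        constructor
        · rintro ⟨y, hy, rfl⟩
          exact ⟨y.2, hy⟩
        · rintro ⟨hx, h⟩
          exact ⟨⟨x, hx⟩, h, rfl⟩
      have hΦ_le_S : ∀ U, Φ U ≤ S := by
        rintro U x ⟨y, hy, rfl⟩
        exact y.2
      have hΦ_mono : ∀ {U U' : Submodule K (S ⧸ T')}, U ≤ U' → Φ U ≤ Φ U' :=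
        fun h => Submodule.map_mono (Submodule.comap_mono h)
      have hΦ_bot : Φ ⊥ = T := by
        rw [hΦdef]
        dsimp only
        rw [Submodule.comap_bot, hπ, Submodule.ker_mkQ, hT', Submodule.map_comap_subtype]
        exact inf_eq_right.mpr hTS
      set W : ℤ → Submodule K V := fun m =>
        if ((l:ℤ)+1) ≤ m then ⊤ else if m < -((l:ℤ)+1) then ⊥ else Φ (W' m) with hWdef
      have hW_top : ∀ m : ℤ, ((l:ℤ)+1) ≤ m → W m = ⊤ := by
        intro m hm
        show (if ((l:ℤ)+1) ≤ m then ⊤ else if m < -((l:ℤ)+1) then ⊥ else Φ (W' m)) = ⊤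
        rw [if_pos hm]
      have hW_bot : ∀ m : ℤ, m < -((l:ℤ)+1) → W m = ⊥ := by
        intro m hm
        show (if ((l:ℤ)+1) ≤ m then ⊤ else if m < -((l:ℤ)+1) then ⊥ else Φ (W' m)) = ⊥
        rw [if_neg (by omega), if_pos hm]
      have hW_mid : ∀ m : ℤ, -((l:ℤ)+1) ≤ m → m ≤ (l:ℤ) → W m = Φ (W' m) := by
        intro m h1 h2
        show (if ((l:ℤ)+1) ≤ m then ⊤ else if m < -((l:ℤ)+1) then ⊥ else Φ (W' m)) = _
        rw [if_neg (by omega), if_neg (by omega)]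
      -- main existence proof
      have hWgood : IsWeightFiltration N W := by
        refine ⟨?_, ⟨-((l:ℤ)+2), hW_bot _ (by omega)⟩, ⟨(l:ℤ)+1, hW_top _ le_rfl⟩, ?_, ?_⟩
        · -- Monotone
          intro a b hab
          by_cases hb1 : ((l:ℤ)+1) ≤ b
          · rw [hW_top b hb1]; exact le_top
          · by_cases ha1 : a < -((l:ℤ)+1)
            · rw [hW_bot a ha1]; exact bot_le
            · rw [hW_mid a (by omega) (by omega), hW_mid b (by omega) (by omega)]
              exact hΦ_mono (hW'.1 hab)
        · -- N (W m) ≤ W (m - 2)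
          intro m
          by_cases hm1 : ((l:ℤ)+1) ≤ m
          · by_cases hm2 : ((l:ℤ)+1) ≤ m - 2
            · rw [hW_top _ hm2]; exact le_top
            · rw [hW_top m hm1, hW_mid (m-2) (by omega) (by omega)]
              rintro _ ⟨y, -, rfl⟩
              refine (mem_Φ _ _).mpr ⟨hNx_mem y, ?_⟩
              have hmem : π ⟨N y, hNx_mem y⟩ ∈ LinearMap.ker (N' ^ l) := by
                rw [LinearMap.mem_ker, hN'_pow_mk]
                apply hπ_zero
                rw [hNS_pow_coe]
                exact ⟨y, by rw [← Module.End.mul_apply, ← pow_succ]⟩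
              exact hW'.1 (show (l:ℤ) - 1 ≤ m - 2 by omega) (hker' l hmem)
          · by_cases hm3 : m < -((l:ℤ)+1)
            · rw [hW_bot m hm3, Submodule.map_bot]; exact bot_le
            · by_cases hm4 : -((l:ℤ)+1) ≤ m - 2
              · rw [hW_mid m (by omega) (by omega), hW_mid (m-2) hm4 (by omega)]
                rintro _ ⟨x, hx, rfl⟩
                obtain ⟨hxS, hπx⟩ := (mem_Φ _ _).mp hx
                refine (mem_Φ _ _).mpr ⟨hNx_mem x, ?_⟩
                have he : π ⟨N x, hNx_mem x⟩ = N' (π ⟨x, hxS⟩) := by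
                  rw [hN'_mk]
                  rfl
                rw [he]
                exact hW'.2.2.2.1 m ⟨π ⟨x, hxS⟩, hπx, rfl⟩
              · rw [hW_mid m (by omega) (by omega), hW_bot (m-2) (by omega)]
                rintro _ ⟨x, hx, rfl⟩
                rw [Submodule.mem_bot]
                obtain ⟨hxS, hπx⟩ := (mem_Φ _ _).mp hx
                set a : ℕ := (-m).toNat with ha
                have haa : -(a:ℤ) = m := by omega
                have hrange := hW'.le_range a
                rw [haa] at hrange
                obtain ⟨y', hy'⟩ := hrange hπx
                obtain ⟨y, rfl⟩ := hπ_surj y'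
                rw [hN'_pow_mk] at hy'
                have hd : x - (N ^ a) (y : V) ∈ T := by
                  have h0 : π (⟨x, hxS⟩ - (NS ^ a) y) = 0 := by
                    rw [map_sub, hy', sub_self]
                  have := hπ_zero' _ h0
                  rwa [Submodule.coe_sub, hNS_pow_coe] at this
                obtain ⟨z, hz⟩ := hd
                have hx_eq : x = (N ^ a) (y : V) + (N ^ (l+1)) z := by
                  rw [hz]; abel
                rw [hx_eq, map_add]
                have h1 : N ((N ^ a) (y : V)) = 0 := by
                  rw [← Module.End.mul_apply, ← pow_succ']
                  exact hpow_ker (a+1) (by omega) _ y.2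
                have h2 : N ((N ^ (l+1)) z) = 0 := by
                  rw [← Module.End.mul_apply, ← pow_succ', hpow_zero (l+1+1) (by omega)]
                  rfl
                rw [h1, h2, add_zero]
        · -- graded conditions
          intro k
          by_cases hk1 : l + 2 ≤ k
          · constructor
            · rw [hW_top (k:ℤ) (by push_cast; omega), hW_top ((k:ℤ)-1) (by push_cast; omega)]
              exact le_top
            · rw [hW_bot (-(k:ℤ)) (by push_cast; omega)]
              exact bot_le
          · by_cases hk2 : k = l + 1
            · subst hk2
              constructor
              · rw [hW_bot (-((l+1:ℕ):ℤ)-1) (by push_cast; omega),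
                  hW_mid (((l+1:ℕ):ℤ)-1) (by push_cast; omega) (by push_cast; omega)]
                intro x hx
                have hx2 := (Submodule.mem_inf.mp hx).2
                rw [Submodule.mem_comap, Submodule.mem_bot] at hx2
                have hxS : x ∈ S := hx2
                refine (mem_Φ _ _).mpr ⟨hxS, ?_⟩
                rw [hW'top _ (by push_cast; omega)]
                trivial
              · rw [hW_bot (-((l+1:ℕ):ℤ)-1) (by push_cast; omega),
                  hW_mid (-((l+1:ℕ):ℤ)) (by push_cast; omega) (by push_cast; omega),
                  hW_top ((l+1:ℕ):ℤ) (by push_cast; omega),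
                  hW'bot (-((l+1:ℕ):ℤ)) (by push_cast; omega), hΦ_bot]
                rintro x ⟨y, rfl⟩
                refine Submodule.mem_sup.mpr ⟨0, zero_mem _, (N ^ (l+1)) y, ⟨y, trivial, rfl⟩,
                  by rw [zero_add]⟩
            · -- k ≤ l
              have hkl : k ≤ l := by omega
              constructor
              · rw [hW_mid (k:ℤ) (by push_cast; omega) (by push_cast; omega),
                  hW_mid (-(k:ℤ)-1) (by push_cast; omega) (by push_cast; omega),
                  hW_mid ((k:ℤ)-1) (by push_cast; omega) (by push_cast; omega)]
                intro x hx
                obtain ⟨hx1, hx2⟩ := Submodule.mem_inf.mp hx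
                obtain ⟨hxS, hπx⟩ := (mem_Φ _ _).mp hx1
                rw [Submodule.mem_comap] at hx2
                obtain ⟨hS2, hπ2⟩ := (mem_Φ _ _).mp hx2
                have he : π ⟨(N ^ k) x, hS2⟩ = (N' ^ k) (π ⟨x, hxS⟩) := by
                  rw [hN'_pow_mk]
                  congr 1
                  exact Subtype.ext (by rw [hNS_pow_coe])
                have hmem : π ⟨x, hxS⟩ ∈
                    W' (k:ℤ) ⊓ (W' (-(k:ℤ)-1)).comap (N' ^ k) := by
                  refine Submodule.mem_inf.mpr ⟨hπx, ?_⟩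
                  rw [Submodule.mem_comap, ← he]
                  exact hπ2
                have := (hW'.2.2.2.2 k).1 hmem
                exact (mem_Φ _ _).mpr ⟨hxS, this⟩
              · rw [hW_mid (-(k:ℤ)) (by push_cast; omega) (by push_cast; omega),
                  hW_mid (-(k:ℤ)-1) (by push_cast; omega) (by push_cast; omega),
                  hW_mid (k:ℤ) (by push_cast; omega) (by push_cast; omega)]
                intro x hx
                obtain ⟨hxS, hπx⟩ := (mem_Φ _ _).mp hx
                have := (hW'.2.2.2.2 k).2 hπx
                obtain ⟨u', hu', z', hz', hsum⟩ := Submodule.mem_sup.mp this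
                obtain ⟨w', hw', rfl⟩ := hz'
                obtain ⟨v, rfl⟩ := hπ_surj w'
                have hNv_mem : (N ^ k) (v : V) ∈ S := by
                  rw [← hNS_pow_coe]
                  exact ((NS ^ k) v).2
                have hsub : x - (N ^ k) (v : V) ∈ S := sub_mem hxS hNv_mem
                have he : (⟨x - (N ^ k) (v : V), hsub⟩ : S) = ⟨x, hxS⟩ - (NS ^ k) v :=
                  Subtype.ext (by rw [AddSubgroupClass.coe_sub, hNS_pow_coe])
                have hπsub : π ⟨x - (N ^ k) (v : V), hsub⟩ = u' := by
                  rw [he, map_sub, ← hsum, ← hN'_pow_mk]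
                  exact add_sub_cancel_right u' _
                refine Submodule.mem_sup.mpr
                  ⟨x - (N ^ k) (v : V), ?_, (N ^ k) (v : V), ?_, by abel⟩
                · exact (mem_Φ _ _).mpr ⟨hsub, by rw [hπsub]; exact hu'⟩
                · refine ⟨(v : V), ?_, rfl⟩
                  exact (mem_Φ _ _).mpr ⟨v.2, hw'⟩
      -- uniqueness
      refine ⟨W, hWgood, ?_⟩
      intro W2 hW2
      have h2top : ∀ m : ℤ, ((l:ℤ)+1) ≤ m → W2 m = ⊤ := by
        intro m hm
        rw [eq_top_iff]
        have h := hW2.ker_le (l+1)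
        rw [show N ^ (l+1+1) = 0 from hN, LinearMap.ker_zero] at h
        exact le_trans h (hW2.1 (by push_cast; omega))
      have h2bot : ∀ m : ℤ, m < -((l:ℤ)+1) → W2 m = ⊥ := by
        intro m hm
        rw [eq_bot_iff]
        have h := hW2.le_range (l+2)
        rw [hpow_zero (l+2) le_rfl, LinearMap.range_zero] at h
        exact le_trans (hW2.1 (show m ≤ -((l+2:ℕ):ℤ) by push_cast; omega)) h
      have h2S : W2 (l:ℤ) = S := by
        refine le_antisymm ?_ (hW2.ker_le l)
        intro x hx
        have h := hW2.map_pow (l+1) (l:ℤ) ⟨x, hx, rfl⟩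
        rw [h2bot ((l:ℤ) - 2*((l+1:ℕ):ℤ)) (by push_cast; omega), Submodule.mem_bot] at h
        exact h
      have h2T : W2 (-((l:ℤ)+1)) = T := by
        refine le_antisymm ?_ ?_
        · have h := (hW2.2.2.2.2 (l+1)).2
          rw [h2bot (-((l+1:ℕ):ℤ)-1) (by push_cast; omega)] at h
          have h2 : W2 (-((l+1:ℕ):ℤ)) ≤ ⊥ ⊔ LinearMap.range (N ^ (l+1)) := by
            refine le_trans h (sup_le_sup_left ?_ _)
            rintro y ⟨u, -, rfl⟩
            exact ⟨u, rfl⟩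
          rw [bot_sup_eq] at h2
          exact le_trans (le_of_eq (by push_cast; ring_nf)) h2
        · have h := hW2.map_pow (l+1) ((l+1:ℕ):ℤ)
          rw [h2top ((l+1:ℕ):ℤ) (by push_cast; omega), Submodule.map_top] at h
          refine le_trans (le_of_eq rfl) (le_trans h (le_of_eq ?_))
          congr 1
          push_cast; ring
      have h2_le_S : ∀ m : ℤ, m ≤ (l:ℤ) → W2 m ≤ S := by
        intro m hm
        rw [← h2S]
        exact hW2.1 hm
      have h2_ge_T : ∀ m : ℤ, -((l:ℤ)+1) ≤ m → T ≤ W2 m := by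
        intro m hm
        rw [← h2T]
        exact hW2.1 hm
      set W2' : ℤ → Submodule K (S ⧸ T') := fun m => ((W2 m).comap S.subtype).map π
        with hW2'def
      have mem_W2' : ∀ (m : ℤ) (y : S ⧸ T'),
          y ∈ W2' m ↔ ∃ x : S, (x : V) ∈ W2 m ∧ π x = y := by
        intro m y
        constructor
        · rintro ⟨x, hx, rfl⟩
          exact ⟨x, hx, rfl⟩
        · rintro ⟨x, hx, rfl⟩
          exact ⟨x, hx, rfl⟩
      have h2'top : ∀ m : ℤ, (l:ℤ) ≤ m → W2' m = ⊤ := by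
        intro m hm
        rw [eq_top_iff]
        intro y _
        obtain ⟨x, rfl⟩ := hπ_surj y
        exact (mem_W2' m _).mpr ⟨x, hW2.1 hm (by rw [h2S]; exact x.2), rfl⟩
      have h2'bot : ∀ m : ℤ, m ≤ -((l:ℤ)+1) → W2' m = ⊥ := by
        intro m hm
        rw [eq_bot_iff]
        rintro y ⟨x, hx, rfl⟩
        rw [Submodule.mem_bot]
        apply hπ_zero
        rw [← h2T]
        exact hW2.1 hm hx
      have hW2' : IsWeightFiltration N' W2' := by
        refine ⟨?_, ⟨-((l:ℤ)+1), h2'bot _ le_rfl⟩, ⟨(l:ℤ), h2'top _ le_rfl⟩, ?_, ?_⟩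
        · intro a b hab
          exact Submodule.map_mono (Submodule.comap_mono (hW2.1 hab))
        · intro m
          rintro _ ⟨z, hz, rfl⟩
          obtain ⟨y, hy, rfl⟩ := hz
          rw [hN'_mk]
          refine (mem_W2' _ _).mpr ⟨NS y, ?_, rfl⟩
          rw [hNS_coe]
          exact hW2.2.2.2.1 m ⟨(y : V), hy, rfl⟩
        · intro k
          by_cases hk : k ≤ l
          · constructor
            · intro y hy
              obtain ⟨hy1, hy2⟩ := Submodule.mem_inf.mp hy
              obtain ⟨x, hx, rfl⟩ := (mem_W2' _ _).mp hy1
              rw [Submodule.mem_comap, hN'_pow_mk] at hy2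
              obtain ⟨u, hu, hπu⟩ := (mem_W2' _ _).mp hy2
              have hd : ((NS ^ k) x : V) - (u : V) ∈ T := by
                have h0 : π ((NS ^ k) x - u) = 0 := by
                  rw [map_sub, hπu, sub_self]
                have := hπ_zero' _ h0
                rwa [Submodule.coe_sub] at this
              have hNkx : (N ^ k) (x : V) ∈ W2 (-(k:ℤ)-1) := by
                have he : (N ^ k) (x : V) = (u : V) + (((NS ^ k) x : V) - (u : V)) := by
                  rw [← hNS_pow_coe]; abel
                rw [he]
                exact add_mem hu (h2_ge_T _ (by omega) hd)
              have hmem : (x : V) ∈ W2 (k:ℤ) ⊓ (W2 (-(k:ℤ)-1)).comap (N ^ k) :=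
                Submodule.mem_inf.mpr ⟨hx, Submodule.mem_comap.mpr hNkx⟩
              have := (hW2.2.2.2.2 k).1 hmem
              exact (mem_W2' _ _).mpr ⟨x, this, rfl⟩
            · intro y hy
              obtain ⟨x, hx, rfl⟩ := (mem_W2' _ _).mp hy
              have := (hW2.2.2.2.2 k).2 hx
              obtain ⟨u, hu, z, hz, hsum⟩ := Submodule.mem_sup.mp this
              obtain ⟨w, hw, rfl⟩ := hz
              have hwS : w ∈ S := h2_le_S (k:ℤ) (by omega) hw
              have hNkw : (N ^ k) w ∈ S := by
                rw [← hNS_pow_coe k ⟨w, hwS⟩]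
                exact ((NS ^ k) ⟨w, hwS⟩).2
              have huS : u ∈ S := by
                have : u = (x : V) - (N ^ k) w := by rw [← hsum]; abel
                rw [this]
                exact sub_mem x.2 hNkw
              refine Submodule.mem_sup.mpr ⟨π ⟨u, huS⟩, ?_, (N' ^ k) (π ⟨w, hwS⟩), ?_, ?_⟩
              · exact (mem_W2' _ _).mpr ⟨⟨u, huS⟩, hu, rfl⟩
              · exact ⟨π ⟨w, hwS⟩, (mem_W2' _ _).mpr ⟨⟨w, hwS⟩, hw, rfl⟩, rfl⟩
              · rw [hN'_pow_mk, ← map_add]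
                congr 1
                apply Subtype.ext
                rw [Submodule.coe_add, hNS_pow_coe]
                exact hsum
          · constructor
            · intro y hy
              have hy1 := (Submodule.mem_inf.mp hy).1
              rw [h2'top ((k:ℤ)-1) (by omega)]
              trivial
            · intro y hy
              rw [h2'bot (-(k:ℤ)) (by omega)] at hy
              rw [Submodule.mem_bot] at hy
              subst hy
              exact zero_mem _
      have huniq' := hW'uniq W2' hW2'
      funext m
      by_cases hm1 : ((l:ℤ)+1) ≤ m
      · rw [h2top m hm1, hW_top m hm1]
      · by_cases hm2 : m < -((l:ℤ)+1)
        · rw [h2bot m hm2, hW_bot m hm2]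
        · rw [hW_mid m (by omega) (by omega)]
          have hrec : Φ (W2' m) = W2 m := by
            rw [hΦdef, hW2'def]
            dsimp only
            rw [hπ, Submodule.comap_map_mkQ, Submodule.map_sup, Submodule.map_comap_subtype,
              Submodule.map_comap_subtype]
            rw [inf_eq_right.mpr hTS, inf_eq_right.mpr (h2_le_S m (by omega))]
            exact sup_eq_right.mpr (h2_ge_T m (by omega))
          rw [← hrec, huniq']

theorem stmt4 {K V : Type*} [Field K] [CharZero K] [AddCommGroup V] [Module K V]
    [FiniteDimensional K V] (N : V →ₗ[K] V) (hN : IsNilpotent N) :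
    ∃! W : ℤ → Submodule K V, IsWeightFiltration N W := by
  obtain ⟨n, hn⟩ := hN
  exact weight_aux n N (by rw [pow_succ, hn, zero_mul])
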